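/- Substitution lemma (Lemma 1): Let I be an interpretation into saturated sets, t' a normal λ-term with x₁:B₁,…,xₙ:Bₙ ⊢_F t' : A, and t a λ-term with t ≃_β t'. If uᵢ ∈ |Bᵢ|_I for 1 ≤ i ≤ n, then t[u₁/x₁,…,uₙ/xₙ] ∈ |A|_I. -/

import Mathlib

/-! Untyped λ-calculus (de Bruijn) and System F realizability semantics. -/

/-- Untyped λ-terms in de Bruijn notation. -/
inductive Lam : Type
  | var : ℕ → Lam
  | app : Lam → Lam → Lam
  | lam : Lam → Lam
deriving DecidableEq

namespace Lam

/-- Shift the free variables ≥ `d` up by one. -/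
def lift (d : ℕ) : Lam → Lam
  | var n => if n < d then var n else var (n + 1)
  | app t u => app (lift d t) (lift d u)
  | lam t => lam (lift (d + 1) t)

/-- Capture-avoiding substitution of `u` for the variable `k` (de Bruijn). -/
def subst : Lam → ℕ → Lam → Lam
  | var n, k, u => if n = k then u else if k < n then var (n - 1) else var n
  | app t s, k, u => app (subst t k u) (subst s k u)
  | lam t, k, u => lam (subst t (k + 1) (lift 0 u))

/-- Free variables of a term. -/
def fv : Lam → Finset ℕ
  | var n => {n}
  | app t u => fv t ∪ fv u
  | lam t => ((fv t).erase 0).image (· - 1)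

/-- One-step β-reduction. -/
inductive Beta : Lam → Lam → Prop
  | beta (t u : Lam) : Beta (app (lam t) u) (subst t 0 u)
  | appL {t t' : Lam} (u : Lam) : Beta t t' → Beta (app t u) (app t' u)
  | appR (t : Lam) {u u' : Lam} : Beta u u' → Beta (app t u) (app t u')
  | lam {t t' : Lam} : Beta t t' → Beta (lam t) (lam t')

/-- Many-step β-reduction. -/
def BetaStar : Lam → Lam → Prop := Relation.ReflTransGen Beta

/-- β-equivalence. -/
def BetaEq : Lam → Lam → Prop := Relation.EqvGen Beta

/-- One-step η-reduction. -/
inductive Eta : Lam → Lam → Prop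
  | eta (t : Lam) : Eta (lam (app (lift 0 t) (var 0))) t
  | appL {t t' : Lam} (u : Lam) : Eta t t' → Eta (app t u) (app t' u)
  | appR (t : Lam) {u u' : Lam} : Eta u u' → Eta (app t u) (app t u')
  | lam {t t' : Lam} : Eta t t' → Eta (lam t) (lam t')

/-- βη-equivalence. -/
def BetaEtaEq : Lam → Lam → Prop := Relation.EqvGen (fun t u => Beta t u ∨ Eta t u)

/-- One-step weak head reduction: contracts the weak head redex `(λ t) u`
possibly applied to further arguments. -/
inductive Whr : Lam → Lam → Prop
  | head (t u : Lam) : Whr (app (lam t) u) (subst t 0 u)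
  | appL {t t' : Lam} (u : Lam) : Whr t t' → Whr (app t u) (app t' u)

/-- Many-step weak head reduction (`≻_f`). -/
def WhrStar : Lam → Lam → Prop := Relation.ReflTransGen Whr

/-- A term is normal when it has no β-redex. -/
def Normal (t : Lam) : Prop := ∀ u, ¬ Beta t u

def Normalizable (t : Lam) : Prop := ∃ u, BetaStar t u ∧ Normal u

/-- `(t)v₁…vₘ`. -/
def appList (t : Lam) (l : List Lam) : Lam := l.foldl app t

end Lam

/-- A set of λ-terms is saturated when it is closed under weak-head-expansion. -/
def Saturated (G : Set Lam) : Prop := ∀ t u : Lam, Lam.WhrStar t u → u ∈ G → t ∈ G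

/-- A set of λ-terms is β-saturated when it is closed under β-expansion. -/
def BetaSaturated (G : Set Lam) : Prop := ∀ t u : Lam, Lam.BetaStar t u → u ∈ G → t ∈ G

/-- `G → G' = {u : ∀ t ∈ G, (u)t ∈ G'}`. -/
def arrowSet (G G' : Set Lam) : Set Lam := {u | ∀ t ∈ G, Lam.app u t ∈ G'}

/-- Types of System F (de Bruijn type variables). -/
inductive Ty : Type
  | var : ℕ → Ty
  | arr : Ty → Ty → Ty
  | all : Ty → Ty
deriving DecidableEq

namespace Ty

/-- Shift the free type variables ≥ `d` up by one. -/
def lift (d : ℕ) : Ty → Ty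
  | var n => if n < d then var n else var (n + 1)
  | arr A B => arr (lift d A) (lift d B)
  | all A => all (lift (d + 1) A)

/-- Capture-avoiding substitution of the type `C` for the type variable `k`. -/
def subst : Ty → ℕ → Ty → Ty
  | var n, k, C => if n = k then C else if k < n then var (n - 1) else var n
  | arr A B, k, C => arr (subst A k C) (subst B k C)
  | all A, k, C => all (subst A (k + 1) (lift 0 C))

/-- Free type variables. -/
def fv : Ty → Finset ℕ
  | var n => {n}
  | arr A B => fv A ∪ fv B
  | all A => ((fv A).erase 0).image (· - 1)

end Ty

mutual
  /-- ∀⁺ types: types with positive quantifiers. -/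
  inductive PosTy : Ty → Prop
    | var (n : ℕ) : PosTy (Ty.var n)
    | arr {B A : Ty} : NegTy B → PosTy A → PosTy (Ty.arr B A)
    | all {A : Ty} : PosTy A → 0 ∈ A.fv → PosTy (Ty.all A)
  /-- ∀⁻ types: types with negative quantifiers. -/
  inductive NegTy : Ty → Prop
    | var (n : ℕ) : NegTy (Ty.var n)
    | arr {B A : Ty} : PosTy B → NegTy A → NegTy (Ty.arr B A)
end

/-- Typing contexts: a partial assignment of types to (de Bruijn) term variables. -/
def Ctx : Type := ℕ → Option Ty

def Ctx.empty : Ctx := fun _ => none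

def Ctx.cons (B : Ty) (Γ : Ctx) : Ctx := fun n =>
  match n with
  | 0 => some B
  | n + 1 => Γ n

/-- Shift all type variables of a context (used for ∀-introduction: the fresh
type variable `0` does not occur in the shifted context). -/
def Ctx.liftTy (Γ : Ctx) : Ctx := fun n => (Γ n).map (Ty.lift 0)

/-- Curry-style typing of System F. -/
inductive TyJ : Ctx → Lam → Ty → Prop
  | var {Γ : Ctx} {x : ℕ} {A : Ty} : Γ x = some A → TyJ Γ (Lam.var x) A
  | lam {Γ : Ctx} {B C : Ty} {t : Lam} :
      TyJ (Ctx.cons B Γ) t C → TyJ Γ (Lam.lam t) (Ty.arr B C)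
  | app {Γ : Ctx} {B C : Ty} {u v : Lam} :
      TyJ Γ u (Ty.arr B C) → TyJ Γ v B → TyJ Γ (Lam.app u v) C
  | allI {Γ : Ctx} {A : Ty} {t : Lam} :
      TyJ (Ctx.liftTy Γ) t A → TyJ Γ t (Ty.all A)
  | allE {Γ : Ctx} {A : Ty} {t : Lam} (C : Ty) :
      TyJ Γ t (Ty.all A) → TyJ Γ t (Ty.subst A 0 C)

/-- System F0 : System F where ∀-elimination only instantiates by type variables. -/
inductive TyJ0 : Ctx → Lam → Ty → Prop
  | var {Γ : Ctx} {x : ℕ} {A : Ty} : Γ x = some A → TyJ0 Γ (Lam.var x) A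
  | lam {Γ : Ctx} {B C : Ty} {t : Lam} :
      TyJ0 (Ctx.cons B Γ) t C → TyJ0 Γ (Lam.lam t) (Ty.arr B C)
  | app {Γ : Ctx} {B C : Ty} {u v : Lam} :
      TyJ0 Γ u (Ty.arr B C) → TyJ0 Γ v B → TyJ0 Γ (Lam.app u v) C
  | allI {Γ : Ctx} {A : Ty} {t : Lam} :
      TyJ0 (Ctx.liftTy Γ) t A → TyJ0 Γ t (Ty.all A)
  | allE {Γ : Ctx} {A : Ty} {t : Lam} (Y : ℕ) :
      TyJ0 Γ t (Ty.all A) → TyJ0 Γ t (Ty.subst A 0 (Ty.var Y))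

/-- Interpretations: assignments of sets of λ-terms to type variables. -/
def Interp : Type := ℕ → Set Lam

def Interp.cons (G : Set Lam) (I : Interp) : Interp := fun n =>
  match n with
  | 0 => G
  | n + 1 => I n

/-- Interpretation of types, parameterized by the admissibility class `C` of
sets used to interpret type variables (e.g. `Saturated`). -/
def interpC (C : Set Lam → Prop) : Ty → Interp → Set Lam
  | Ty.var n, I => I n
  | Ty.arr A B, I => arrowSet (interpC C A I) (interpC C B I)
  | Ty.all A, I => ⋂ (G : Set Lam) (_ : C G), interpC C A (Interp.cons G I)

/-- Girard–Krivine interpretation `|A|_I` with saturated sets. -/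
def interp : Ty → Interp → Set Lam := interpC Saturated

/-- `|A|`, the intersection of `|A|_I` over all admissible interpretations. -/
def SemC (C : Set Lam → Prop) (A : Ty) : Set Lam :=
  {t | ∀ I : Interp, (∀ n, C (I n)) → t ∈ interpC C A I}

/-- `|A| = ⋂_I |A|_I` over interpretations into saturated sets. -/
def Sem (A : Ty) : Set Lam := SemC Saturated A

/-- A simultaneous substitution shifted under a binder. -/
def liftSub (σ : ℕ → Lam) : ℕ → Lam := fun n =>
  match n with
  | 0 => Lam.var 0
  | n + 1 => Lam.lift 0 (σ n)

/-- Simultaneous (capture-avoiding) substitution `t[σ]`. -/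
def msubst (σ : ℕ → Lam) : Lam → Lam
  | Lam.var n => σ n
  | Lam.app t u => Lam.app (msubst σ t) (msubst σ u)
  | Lam.lam t => Lam.lam (msubst (liftSub σ) t)

namespace Lam

def upρ (ρ : ℕ → ℕ) : ℕ → ℕ := fun n => match n with | 0 => 0 | n + 1 => ρ n + 1

def rename (ρ : ℕ → ℕ) : Lam → Lam
  | var n => var (ρ n)
  | app t u => app (rename ρ t) (rename ρ u)
  | lam t => lam (rename (upρ ρ) t)

theorem rename_cong {ρ ρ' : ℕ → ℕ} (h : ∀ n, ρ n = ρ' n) (t : Lam) :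
    rename ρ t = rename ρ' t := by
  induction t generalizing ρ ρ' with
  | var n => simp [rename, h]
  | app a b iha ihb => simp [rename, iha h, ihb h]
  | lam s ih =>
    simp only [rename]
    exact congrArg Lam.lam (ih (fun n => by cases n <;> simp [upρ, h]))

theorem lift_eq_rename (d : ℕ) (t : Lam) :
    lift d t = rename (fun n => if n < d then n else n + 1) t := by
  induction t generalizing d with
  | var n => simp only [lift, rename]; split <;> simp_all
  | app a b iha ihb => simp [lift, rename, iha, ihb]
  | lam s ih =>
    simp only [lift, rename]
    refine congrArg Lam.lam ((ih (d+1)).trans (rename_cong (fun n => ?_) s).symm)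
    cases n with
    | zero => simp [upρ]
    | succ m => simp only [upρ]; split <;> split <;> omega

theorem lift_zero_eq (t : Lam) : lift 0 t = rename Nat.succ t := by
  rw [lift_eq_rename]; exact rename_cong (fun n => by simp) t

theorem msubst_cong {σ σ' : ℕ → Lam} (h : ∀ n, σ n = σ' n) (t : Lam) :
    msubst σ t = msubst σ' t := by
  induction t generalizing σ σ' with
  | var n => simp [msubst, h]
  | app a b iha ihb => simp [msubst, iha h, ihb h]
  | lam s ih =>
    simp only [msubst]
    exact congrArg Lam.lam (ih (fun n => by cases n <;> simp [liftSub, h]))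

theorem msubst_rename (σ : ℕ → Lam) (ρ : ℕ → ℕ) (t : Lam) :
    msubst σ (rename ρ t) = msubst (fun n => σ (ρ n)) t := by
  induction t generalizing σ ρ with
  | var n => rfl
  | app a b iha ihb => simp [rename, msubst, iha, ihb]
  | lam s ih =>
    simp only [rename, msubst]
    refine congrArg Lam.lam ((ih _ _).trans (msubst_cong (fun n => ?_) s))
    cases n <;> simp [liftSub, upρ]

theorem rename_rename (ρ ρ' : ℕ → ℕ) (t : Lam) :
    rename ρ (rename ρ' t) = rename (fun n => ρ (ρ' n)) t := by
  induction t generalizing ρ ρ' with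
  | var n => rfl
  | app a b iha ihb => simp [rename, iha, ihb]
  | lam s ih =>
    simp only [rename]
    refine congrArg Lam.lam ((ih _ _).trans (rename_cong (fun n => ?_) s))
    cases n <;> simp [upρ]

theorem rename_msubst (ρ : ℕ → ℕ) (σ : ℕ → Lam) (t : Lam) :
    rename ρ (msubst σ t) = msubst (fun n => rename ρ (σ n)) t := by
  induction t generalizing σ ρ with
  | var n => rfl
  | app a b iha ihb => simp [rename, msubst, iha, ihb]
  | lam s ih =>
    simp only [rename, msubst]
    refine congrArg Lam.lam ((ih _ _).trans (msubst_cong (fun n => ?_) s))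
    cases n with
    | zero => rfl
    | succ m =>
      simp only [liftSub, lift_zero_eq, rename_rename]
      exact rename_cong (fun n => by simp [upρ]) _

theorem msubst_msubst (σ τ : ℕ → Lam) (t : Lam) :
    msubst σ (msubst τ t) = msubst (fun n => msubst σ (τ n)) t := by
  induction t generalizing σ τ with
  | var n => rfl
  | app a b iha ihb => simp [msubst, iha, ihb]
  | lam s ih =>
    simp only [msubst]
    refine congrArg Lam.lam ((ih _ _).trans (msubst_cong (fun n => ?_) s))
    cases n with
    | zero => rfl
    | succ m =>
      simp only [liftSub, lift_zero_eq, msubst_rename, rename_msubst]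

theorem msubst_var_id (t : Lam) : msubst Lam.var t = t := by
  induction t with
  | var n => rfl
  | app a b iha ihb => simp [msubst, iha, ihb]
  | lam s ih =>
    simp only [msubst]
    refine congrArg Lam.lam (.trans (msubst_cong (fun n => ?_) s) ih)
    cases n <;> simp [liftSub, lift]

/-- The single substitution as a simultaneous one. -/
def sgl (k : ℕ) (u : Lam) : ℕ → Lam := fun n =>
  if n = k then u else if k < n then var (n - 1) else var n

theorem subst_eq_msubst (t : Lam) (k : ℕ) (u : Lam) :
    subst t k u = msubst (sgl k u) t := by
  induction t generalizing k u with
  | var n => rfl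
  | app a b iha ihb => simp [subst, msubst, iha, ihb]
  | lam s ih =>
    simp only [subst, msubst]
    refine congrArg Lam.lam ((ih _ _).trans (msubst_cong (fun n => ?_) s))
    cases n with
    | zero => simp [sgl, liftSub]
    | succ m =>
      simp only [sgl, liftSub]
      rcases lt_trichotomy m k with h | h | h
      · rw [if_neg (by omega), if_neg (by omega), if_neg (by omega), if_neg (by omega)]
        simp [lift]
      · subst h; simp
      · rw [if_neg (by omega), if_pos (by omega), if_neg (by omega), if_pos (by omega)]
        simp only [lift]
        rw [if_neg (by omega)]
        congr 1; omega

/-- Prepend a term to a substitution. -/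
def consSub (u : Lam) (σ : ℕ → Lam) : ℕ → Lam := fun n =>
  match n with | 0 => u | n + 1 => σ n

theorem msubst_subst0 (σ : ℕ → Lam) (m n : Lam) :
    msubst σ (subst m 0 n) = subst (msubst (liftSub σ) m) 0 (msubst σ n) := by
  rw [subst_eq_msubst, subst_eq_msubst, msubst_msubst, msubst_msubst]
  refine msubst_cong (fun k => ?_) m
  cases k with
  | zero => simp [sgl, msubst, liftSub]
  | succ j =>
    simp only [sgl, liftSub, lift_zero_eq, msubst_rename]
    rw [if_neg (by omega), if_pos (by omega)]
    simp only [msubst, Nat.add_sub_cancel]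
    exact ((msubst_cong (fun i => by simp [sgl]) (σ j)).trans (msubst_var_id _)).symm

theorem subst0_msubst_liftSub (σ : ℕ → Lam) (s u : Lam) :
    subst (msubst (liftSub σ) s) 0 u = msubst (consSub u σ) s := by
  rw [subst_eq_msubst, msubst_msubst]
  refine msubst_cong (fun k => ?_) s
  cases k with
  | zero => simp [consSub, liftSub, msubst, sgl]
  | succ j =>
    simp only [consSub, liftSub, lift_zero_eq, msubst_rename]
    exact (msubst_cong (fun i => by simp [sgl]) (σ j)).trans (msubst_var_id _)

theorem rename_subst0 (ρ : ℕ → ℕ) (s b : Lam) :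
    rename ρ (subst s 0 b) = subst (rename (upρ ρ) s) 0 (rename ρ b) := by
  rw [subst_eq_msubst, subst_eq_msubst, rename_msubst, msubst_rename]
  refine msubst_cong (fun k => ?_) s
  cases k with
  | zero => simp [sgl, upρ]
  | succ j => simp [sgl, upρ, rename]

end Lam
namespace Lam

/-! Congruence lemmas for multi-step reduction. -/

theorem BetaStar.appL {a a' : Lam} (h : BetaStar a a') (b : Lam) :
    BetaStar (app a b) (app a' b) :=
  Relation.ReflTransGen.lift (fun x => app x b) (fun _ _ h => Beta.appL b h) _ _ h

theorem BetaStar.appR (a : Lam) {b b' : Lam} (h : BetaStar b b') :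
    BetaStar (app a b) (app a b') :=
  Relation.ReflTransGen.lift (fun x => app a x) (fun _ _ h => Beta.appR a h) _ _ h

theorem BetaStar.app_cong {a a' b b' : Lam} (h : BetaStar a a') (h' : BetaStar b b') :
    BetaStar (app a b) (app a' b') :=
  (h.appL b).trans (BetaStar.appR a' h')

theorem BetaStar.lam_cong {s s' : Lam} (h : BetaStar s s') : BetaStar (lam s) (lam s') :=
  Relation.ReflTransGen.lift Lam.lam (fun _ _ h => Beta.lam h) _ _ h

theorem WhrStar.appL {a a' : Lam} (h : WhrStar a a') (b : Lam) :
    WhrStar (app a b) (app a' b) :=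
  Relation.ReflTransGen.lift (fun x => app x b) (fun _ _ h => Whr.appL b h) _ _ h

theorem Whr.beta {t u : Lam} (h : Whr t u) : Beta t u := by
  induction h with
  | head t u => exact Beta.beta t u
  | appL u _ ih => exact Beta.appL u ih

theorem WhrStar.betaStar {t u : Lam} (h : WhrStar t u) : BetaStar t u :=
  Relation.ReflTransGen.mono (fun _ _ h => Whr.beta h) _ _ h

theorem Whr.msubst {t u : Lam} (σ : ℕ → Lam) (h : Whr t u) :
    Whr (msubst σ t) (msubst σ u) := by
  induction h with
  | head s b =>
    simp only [_root_.msubst, msubst_subst0]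
    exact Whr.head _ _
  | appL b _ ih => exact Whr.appL _ ih

theorem WhrStar.msubst {t u : Lam} (σ : ℕ → Lam) (h : WhrStar t u) :
    WhrStar (msubst σ t) (msubst σ u) :=
  Relation.ReflTransGen.lift (_root_.msubst σ) (fun _ _ h => Whr.msubst σ h) _ _ h

/-! Parallel reduction. -/

inductive Par : Lam → Lam → Prop
  | var (n : ℕ) : Par (var n) (var n)
  | app {a a' b b' : Lam} : Par a a' → Par b b' → Par (app a b) (app a' b')
  | lam {s s' : Lam} : Par s s' → Par (lam s) (lam s')
  | beta {s s' b b' : Lam} : Par s s' → Par b b' → Par (app (lam s) b) (subst s' 0 b')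

theorem Par.refl (t : Lam) : Par t t := by
  induction t with
  | var n => exact Par.var n
  | app a b iha ihb => exact Par.app iha ihb
  | lam s ih => exact Par.lam ih

theorem Beta.par {t u : Lam} (h : Beta t u) : Par t u := by
  induction h with
  | beta t u => exact Par.beta (Par.refl t) (Par.refl u)
  | appL u _ ih => exact Par.app ih (Par.refl u)
  | appR t _ ih => exact Par.app (Par.refl t) ih
  | lam _ ih => exact Par.lam ih

theorem Par.betaStar {t u : Lam} (h : Par t u) : BetaStar t u := by
  induction h with
  | var n => exact Relation.ReflTransGen.refl
  | app _ _ iha ihb => exact iha.app_cong ihb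
  | lam _ ih => exact ih.lam_cong
  | @beta s s' b b' _ _ ihs ihb =>
    exact ((ihs.lam_cong.app_cong ihb).tail (Beta.beta s' b'))

theorem Par.rename {t u : Lam} (ρ : ℕ → ℕ) (h : Par t u) :
    Par (rename ρ t) (rename ρ u) := by
  induction h generalizing ρ with
  | var n => exact Par.refl _
  | app _ _ iha ihb => exact Par.app (iha ρ) (ihb ρ)
  | lam _ ih => exact Par.lam (ih _)
  | beta _ _ ihs ihb =>
    simp only [rename, rename_subst0]
    exact Par.beta (ihs _) (ihb ρ)

theorem Par.msubst {t u : Lam} {σ σ' : ℕ → Lam} (hσ : ∀ n, Par (σ n) (σ' n))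
    (h : Par t u) : Par (msubst σ t) (msubst σ' u) := by
  induction h generalizing σ σ' with
  | var n => exact hσ n
  | app _ _ iha ihb => exact Par.app (iha hσ) (ihb hσ)
  | lam _ ih =>
    refine Par.lam (ih (fun n => ?_))
    cases n with
    | zero => exact Par.refl _
    | succ m => simp only [liftSub, lift_zero_eq]; exact (hσ m).rename _
  | beta _ _ ihs ihb =>
    simp only [_root_.msubst, msubst_subst0]
    refine Par.beta (ihs (fun n => ?_)) (ihb hσ)
    cases n with
    | zero => exact Par.refl _
    | succ m => simp only [liftSub, lift_zero_eq]; exact (hσ m).rename _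

theorem Par.subst0 {s s' b b' : Lam} (hs : Par s s') (hb : Par b b') :
    Par (subst s 0 b) (subst s' 0 b') := by
  rw [subst_eq_msubst, subst_eq_msubst]
  refine Par.msubst (fun n => ?_) hs
  cases n with
  | zero => simpa [sgl] using hb
  | succ m =>
    simp only [sgl, if_neg (Nat.succ_ne_zero m), if_pos (Nat.succ_pos m)]
    exact Par.refl _

/-- Complete development. -/
def cd : Lam → Lam
  | var n => var n
  | lam t => lam (cd t)
  | app (lam t) u => subst (cd t) 0 (cd u)
  | app (var n) u => app (var n) (cd u)
  | app (app a b) u => app (cd (app a b)) (cd u)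

theorem Par.cd {t u : Lam} (h : Par t u) : Par u (cd t) := by
  induction h with
  | var n => exact Par.var n
  | @app a a' b b' ha hb iha ihb =>
    cases a with
    | var n => cases ha; exact Par.app iha ihb
    | app c d => exact Par.app iha ihb
    | lam s =>
      cases ha with
      | lam hs =>
        cases iha with
        | lam ihs => exact Par.beta ihs ihb
  | lam _ ih => exact Par.lam ih
  | beta _ _ ihs ihb => exact Par.subst0 ihs ihb

theorem Par.diamond {t u v : Lam} (h1 : Par t u) (h2 : Par t v) :
    ∃ w, Par u w ∧ Par v w := ⟨Lam.cd t, h1.cd, h2.cd⟩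

end Lam
namespace Lam

/-- Internal parallel reduction: a parallel step not contracting the weak head redex. -/
inductive ParInt : Lam → Lam → Prop
  | var (n : ℕ) : ParInt (var n) (var n)
  | lam {s s' : Lam} : Par s s' → ParInt (lam s) (lam s')
  | app {a a' b b' : Lam} : ParInt a a' → Par b b' → ParInt (app a b) (app a' b')

theorem ParInt.par {t u : Lam} (h : ParInt t u) : Par t u := by
  induction h with
  | var n => exact Par.var n
  | lam hs => exact Par.lam hs
  | app _ hb ih => exact Par.app ih hb

theorem ParInt.rfl (t : Lam) : ParInt t t := by
  induction t with
  | var n => exact ParInt.var n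
  | app a b iha _ => exact ParInt.app iha (Par.refl b)
  | lam s _ => exact ParInt.lam (Par.refl s)

theorem liftSub_par {σ σ' : ℕ → Lam} (h : ∀ n, Par (σ n) (σ' n)) :
    ∀ n, Par (liftSub σ n) (liftSub σ' n) := by
  intro n
  cases n with
  | zero => exact Par.refl _
  | succ m => simp only [liftSub, lift_zero_eq]; exact (h m).rename _

/-- Core substitution lemma for internal parallel reduction. -/
theorem ParInt.core {L N : Lam} (h : ParInt L N) {σ σ' : ℕ → Lam}
    (hp : ∀ n, Par (σ n) (σ' n))
    (hw : ∀ n, ∃ K, WhrStar (σ n) K ∧ ParInt K (σ' n)) :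
    ∃ L', WhrStar (msubst σ L) L' ∧ ParInt L' (msubst σ' N) := by
  induction h generalizing σ σ' with
  | var n => exact hw n
  | lam hs =>
    exact ⟨_, Relation.ReflTransGen.refl, ParInt.lam (hs.msubst (liftSub_par hp))⟩
  | @app a a' b b' _ hb iha =>
    obtain ⟨A, h1, h2⟩ := iha hp hw
    exact ⟨Lam.app A (msubst σ b), h1.appL _, ParInt.app h2 (hb.msubst hp)⟩

/-- Takahashi's main lemma: a parallel step factors as weak head steps
followed by an internal parallel step. -/
theorem Par.ml {M N : Lam} (h : Par M N) : ∃ L, WhrStar M L ∧ ParInt L N := by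
  induction h with
  | var n => exact ⟨Lam.var n, Relation.ReflTransGen.refl, ParInt.var n⟩
  | @app a a' b b' _ hb iha _ =>
    obtain ⟨La, h1, h2⟩ := iha
    exact ⟨Lam.app La b, h1.appL b, ParInt.app h2 hb⟩
  | @lam s s' hs _ => exact ⟨Lam.lam s, Relation.ReflTransGen.refl, ParInt.lam hs⟩
  | @beta s s' b b' hs hb ihs ihb =>
    obtain ⟨Ls, hs1, hs2⟩ := ihs
    obtain ⟨Lb, hb1, hb2⟩ := ihb
    have hp : ∀ n, Par (sgl 0 b n) (sgl 0 b' n) := by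
      intro n
      cases n with
      | zero => simpa [sgl] using hb
      | succ m =>
        simp only [sgl, if_neg (Nat.succ_ne_zero m), if_pos (Nat.succ_pos m)]
        exact Par.refl _
    have hwc : ∀ n, ∃ K, WhrStar (sgl 0 b n) K ∧ ParInt K (sgl 0 b' n) := by
      intro n
      cases n with
      | zero => exact ⟨Lb, by simpa [sgl] using hb1, by simpa [sgl] using hb2⟩
      | succ m =>
        simp only [sgl, if_neg (Nat.succ_ne_zero m), if_pos (Nat.succ_pos m)]
        exact ⟨_, Relation.ReflTransGen.refl, ParInt.rfl _⟩
    obtain ⟨L', hL1, hL2⟩ := ParInt.core hs2 hp hwc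
    refine ⟨L', ?_, ?_⟩
    · refine Relation.ReflTransGen.head (Whr.head s b) ?_
      rw [subst_eq_msubst]
      exact (hs1.msubst (sgl 0 b)).trans hL1
    · rw [subst_eq_msubst]
      exact hL2

/-- Postponement of an internal parallel step over a weak head step. -/
theorem ParInt.pl {L M N : Lam} (h : ParInt L M) (hw : Whr M N) :
    ∃ L', WhrStar L L' ∧ Par L' N := by
  induction h generalizing N with
  | var n => cases hw
  | lam _ => cases hw
  | @app a a' b b' ha hb iha =>
    cases hw with
    | head s u =>
      cases ha with
      | lam hs => exact ⟨_, Relation.ReflTransGen.single (Whr.head _ _), Par.subst0 hs hb⟩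
    | appL _ hw' =>
      obtain ⟨P0, h1, h2⟩ := iha hw'
      exact ⟨Lam.app P0 b, h1.appL b, Par.app h2 hb⟩

/-- Pushing a parallel step over weak head steps. -/
theorem Par.hw : ∀ {u v : Lam}, WhrStar u v → ∀ {t : Lam}, Par t u →
    ∃ w, WhrStar t w ∧ Par w v := by
  intro u v hw
  induction hw using Relation.ReflTransGen.head_induction_on with
  | refl => exact fun h => ⟨_, Relation.ReflTransGen.refl, h⟩
  | head hst _ ih =>
    intro t h
    obtain ⟨L, h1, h2⟩ := h.ml
    obtain ⟨L', h3, h4⟩ := h2.pl hst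
    obtain ⟨w, h5, h6⟩ := ih h4
    exact ⟨w, (h1.trans h3).trans h5, h6⟩

/-- Multi-step internal reduction: head structure is stable. -/
inductive MultInt : Lam → Lam → Prop
  | var (n : ℕ) : MultInt (var n) (var n)
  | lam {s s' : Lam} : BetaStar s s' → MultInt (lam s) (lam s')
  | app {a a' b b' : Lam} : MultInt a a' → BetaStar b b' → MultInt (app a b) (app a' b')

theorem MultInt.rfl (t : Lam) : MultInt t t := by
  induction t with
  | var n => exact MultInt.var n
  | app a b iha _ => exact MultInt.app iha Relation.ReflTransGen.refl
  | lam s _ => exact MultInt.lam Relation.ReflTransGen.refl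

theorem MultInt.betaStar {t u : Lam} (h : MultInt t u) : BetaStar t u := by
  induction h with
  | var n => exact Relation.ReflTransGen.refl
  | lam hs => exact hs.lam_cong
  | app _ hb ih => exact ih.app_cong hb

theorem Par.cpm {L X : Lam} (h : MultInt L X) : ∀ {w : Lam}, Par w L →
    ∃ L', WhrStar w L' ∧ MultInt L' X := by
  induction h with
  | var n =>
    intro w hp
    obtain ⟨A, h1, h2⟩ := hp.ml
    cases h2
    exact ⟨_, h1, MultInt.var n⟩
  | lam hb =>
    intro w hp
    obtain ⟨A, h1, h2⟩ := hp.ml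
    cases h2 with
    | lam hq => exact ⟨_, h1, MultInt.lam (hq.betaStar.trans hb)⟩
  | @app a a' b b' _ hb iha =>
    intro w hp
    obtain ⟨A, h1, h2⟩ := hp.ml
    cases h2 with
    | @app A1 _ A2 _ hA1 hA2 =>
      obtain ⟨B1, h3, h4⟩ := iha hA1.par
      exact ⟨Lam.app B1 A2, h1.trans (h3.appL _), MultInt.app h4 (hA2.betaStar.trans hb)⟩

/-- Head standardization: a β-reduction factors as weak head steps followed
by an internal (structure-preserving) reduction. -/
theorem BetaStar.decomp {t X : Lam} (h : BetaStar t X) :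
    ∃ L, WhrStar t L ∧ MultInt L X := by
  induction h using Relation.ReflTransGen.head_induction_on with
  | refl => exact ⟨X, Relation.ReflTransGen.refl, MultInt.rfl X⟩
  | head hb _ ih =>
    obtain ⟨L1, h1, h2⟩ := ih
    obtain ⟨w, h3, h4⟩ := Par.hw h1 hb.par
    obtain ⟨L', h5, h6⟩ := Par.cpm h2 h4
    exact ⟨L', h3.trans h5, h6⟩

/-! Church–Rosser. -/

theorem parStar_betaStar {t u : Lam} (h : Relation.ReflTransGen Par t u) : BetaStar t u := by
  induction h with
  | refl => exact Relation.ReflTransGen.refl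
  | tail _ hp ih => exact ih.trans hp.betaStar

theorem betaEq_join {t u : Lam} (h : BetaEq t u) :
    ∃ v, BetaStar t v ∧ BetaStar u v := by
  have equiv : Equivalence (Relation.Join (Relation.ReflTransGen Par)) :=
    Relation.equivalence_join_reflTransGen (fun a b c h1 h2 =>
      ⟨Lam.cd a, Relation.ReflGen.single h1.cd, Relation.ReflTransGen.single h2.cd⟩)
  have hj : Relation.Join (Relation.ReflTransGen Par) t u := by
    induction h with
    | rel a b hab => exact ⟨b, Relation.ReflTransGen.single hab.par, Relation.ReflTransGen.refl⟩
    | refl a => exact equiv.refl a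
    | symm a b _ ih => exact equiv.symm ih
    | trans a b c _ _ ih1 ih2 => exact equiv.trans ih1 ih2
  obtain ⟨v, h1, h2⟩ := hj
  exact ⟨v, parStar_betaStar h1, parStar_betaStar h2⟩

theorem Normal.star_eq {t u : Lam} (hn : Normal t) (h : BetaStar t u) : t = u := by
  rcases h.cases_head with h | ⟨c, hc, _⟩
  · exact h
  · exact absurd hc (hn c)

theorem betaEq_normal_star {t t' : Lam} (h : BetaEq t t') (hn : Normal t') :
    BetaStar t t' := by
  obtain ⟨v, h1, h2⟩ := betaEq_join h
  rw [hn.star_eq h2]; exact h1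

end Lam
/-! Semantic lemmas. -/

theorem interp_arr (B C : Ty) (I : Interp) :
    interp (Ty.arr B C) I = arrowSet (interp B I) (interp C I) := rfl

theorem interp_all (A : Ty) (I : Interp) :
    interp (Ty.all A) I =
      ⋂ (G : Set Lam) (_ : Saturated G), interp A (Interp.cons G I) := rfl

theorem interp_congr (A : Ty) : ∀ {I I' : Interp}, (∀ n, I n = I' n) →
    interp A I = interp A I' := by
  induction A with
  | var n => intro I I' h; exact h n
  | arr B C ihB ihC =>
    intro I I' h
    rw [interp_arr, interp_arr, ihB h, ihC h]
  | all A ih =>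
    intro I I' h
    rw [interp_all, interp_all]
    refine Set.iInter_congr fun G => Set.iInter_congr fun _ => ih fun n => ?_
    cases n <;> simp [Interp.cons, h]

theorem saturated_cons {G : Set Lam} {I : Interp} (hG : Saturated G)
    (hI : ∀ n, Saturated (I n)) : ∀ n, Saturated (Interp.cons G I n) := by
  intro n; cases n with
  | zero => exact hG
  | succ m => exact hI m

theorem saturated_interp (A : Ty) : ∀ (I : Interp), (∀ n, Saturated (I n)) →
    Saturated (interp A I) := by
  induction A with
  | var n => exact fun I hI => hI n
  | arr B C ihB ihC =>
    intro I hI t u htu hu s hs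
    exact ihC I hI _ _ (htu.appL s) (hu s hs)
  | all A ih =>
    intro I hI t u htu hu
    rw [interp_all] at *
    refine Set.mem_iInter.2 fun G => Set.mem_iInter.2 fun hG => ?_
    have := Set.mem_iInter.1 (Set.mem_iInter.1 hu G) hG
    exact ih _ (saturated_cons hG hI) _ _ htu this

/-- Delete the `d`-th entry of an interpretation. -/
def dropAt (d : ℕ) (I : Interp) : Interp := fun n => if n < d then I n else I (n + 1)

theorem interp_lift (A : Ty) : ∀ (d : ℕ) (I : Interp),
    interp (Ty.lift d A) I = interp A (dropAt d I) := by
  induction A with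
  | var n =>
    intro d I
    have hv : ∀ (m : ℕ) (J : Interp), interp (Ty.var m) J = J m := fun _ _ => rfl
    simp only [Ty.lift]
    by_cases h : n < d <;> simp [h, hv, dropAt]
  | arr B C ihB ihC =>
    intro d I
    simp only [Ty.lift, interp_arr, ihB, ihC]
  | all A ih =>
    intro d I
    simp only [Ty.lift, interp_all]
    refine Set.iInter_congr fun G => Set.iInter_congr fun _ => ?_
    rw [ih (d + 1)]
    refine interp_congr A fun n => ?_
    cases n with
    | zero => simp [dropAt, Interp.cons]
    | succ m =>
      simp only [dropAt, Interp.cons]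
      by_cases h : m < d
      · rw [if_pos (by omega), if_pos h]
      · rw [if_neg (by omega), if_neg h]

/-- Insert a set at position `k` of an interpretation. -/
def insAt (k : ℕ) (G : Set Lam) (I : Interp) : Interp := fun n =>
  if n < k then I n else if n = k then G else I (n - 1)

theorem interp_subst (A : Ty) : ∀ (k : ℕ) (C : Ty) (I : Interp),
    interp (Ty.subst A k C) I = interp A (insAt k (interp C I) I) := by
  induction A with
  | var n =>
    intro k C I
    have hv : ∀ (m : ℕ) (J : Interp), interp (Ty.var m) J = J m := fun _ _ => rfl
    simp only [Ty.subst]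
    rcases lt_trichotomy n k with h | h | h
    · rw [if_neg (by omega), if_neg (by omega), hv, hv]
      simp [insAt, h]
    · subst h
      rw [if_pos rfl, hv]
      simp [insAt]
    · rw [if_neg (by omega), if_pos h, hv, hv]
      simp only [insAt]
      rw [if_neg (by omega), if_neg (by omega)]
  | arr B C' ihB ihC =>
    intro k C I
    simp only [Ty.subst, interp_arr, ihB, ihC]
  | all A ih =>
    intro k C I
    simp only [Ty.subst, interp_all]
    refine Set.iInter_congr fun G => Set.iInter_congr fun _ => ?_
    rw [ih (k + 1)]
    refine interp_congr A fun n => ?_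
    have hC : interp (Ty.lift 0 C) (Interp.cons G I) = interp C I := by
      rw [interp_lift]
      exact interp_congr C fun n => by simp [dropAt, Interp.cons]
    rw [hC]
    cases n with
    | zero => simp [insAt, Interp.cons]
    | succ m =>
      simp only [insAt, Interp.cons]
      rcases lt_trichotomy m k with h | h | h
      · rw [if_pos (by omega), if_pos h]
      · subst h
        rw [if_neg (by omega), if_pos rfl, if_neg (by omega), if_pos rfl]
      · rw [if_neg (by omega), if_neg (by omega), if_neg (by omega), if_neg (by omega)]
        have : m + 1 - 1 = m := by omega
        rw [this]
        cases m with
        | zero => omega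
        | succ j => simp [Interp.cons]

/-- The main induction. -/
theorem substitution_lemma_aux : ∀ {Γ : Ctx} {t' : Lam} {A : Ty}, TyJ Γ t' A →
    ∀ {t : Lam} {σ : ℕ → Lam} {I : Interp}, (∀ n, Saturated (I n)) →
    Lam.BetaStar t t' → (∀ n B, Γ n = some B → σ n ∈ interp B I) →
    msubst σ t ∈ interp A I := by
  intro Γ t' A ht'
  induction ht' with
  | @var Γ x A hx =>
    intro t σ I hI hred hσ
    obtain ⟨L, h1, h2⟩ := hred.decomp
    cases h2
    exact saturated_interp A I hI _ _ (h1.msubst σ) (hσ x A hx)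
  | @lam Γ B C s' _ ih =>
    intro t σ I hI hred hσ
    obtain ⟨L, h1, h2⟩ := hred.decomp
    cases h2 with
    | @lam s _ hs =>
      rw [interp_arr]
      intro u hu
      have hσ' : ∀ n B', Ctx.cons B Γ n = some B' → Lam.consSub u σ n ∈ interp B' I := by
        intro n B' hn
        cases n with
        | zero =>
          cases hn
          exact hu
        | succ m => exact hσ m B' hn
      have hmem := ih hI hs hσ' (t := s)
      refine saturated_interp C I hI _ _ ?_ hmem
      have step1 : Lam.WhrStar (Lam.app (msubst σ t) u)
          (Lam.app (msubst σ (Lam.lam s)) u) := (h1.msubst σ).appL u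
      refine step1.trans (Relation.ReflTransGen.single ?_)
      have : Lam.Whr (Lam.app (Lam.lam (msubst (liftSub σ) s)) u)
          (Lam.subst (msubst (liftSub σ) s) 0 u) := Lam.Whr.head _ _
      rwa [Lam.subst0_msubst_liftSub] at this
  | @app Γ B C u' v' _ _ ihu ihv =>
    intro t σ I hI hred hσ
    obtain ⟨L, h1, h2⟩ := hred.decomp
    cases h2 with
    | @app a _ b _ ha hb =>
      have hu := ihu hI ha.betaStar hσ
      have hv := ihv hI hb hσ
      rw [interp_arr] at hu
      exact saturated_interp C I hI _ _ (h1.msubst σ) (hu _ hv)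
  | @allI Γ A0 s _ ih =>
    intro t σ I hI hred hσ
    rw [interp_all]
    refine Set.mem_iInter.2 fun G => Set.mem_iInter.2 fun hG => ?_
    refine ih (saturated_cons hG hI) hred ?_
    intro n B hn
    obtain ⟨B0, hB0, rfl⟩ := Option.map_eq_some_iff.1 hn
    have : interp (Ty.lift 0 B0) (Interp.cons G I) = interp B0 I := by
      rw [interp_lift]
      exact interp_congr B0 fun n => by simp [dropAt, Interp.cons]
    rw [this]
    exact hσ n B0 hB0
  | @allE Γ A0 s C _ ih =>
    intro t σ I hI hred hσ
    have h := ih hI hred hσ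
    rw [interp_all] at h
    have h2 := Set.mem_iInter.1 (Set.mem_iInter.1 h (interp C I)) (saturated_interp C I hI)
    rw [interp_subst]
    refine (interp_congr A0 fun n => ?_) ▸ h2
    cases n with
    | zero => simp [insAt, Interp.cons]
    | succ m => simp [insAt, Interp.cons]

/-- Lemma 1: if `t'` is normal with `x₁:B₁,…,xₙ:Bₙ ⊢ t' : A`,
`t ≃_β t'`, and `uᵢ ∈ |Bᵢ|_I`, then `t[u₁/x₁,…,uₙ/xₙ] ∈ |A|_I`. -/
theorem substitution_lemma (I : Interp) (hI : ∀ n, Saturated (I n))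
    (Γ : Ctx) (t' : Lam) (A : Ty) (ht' : TyJ Γ t' A) (hnorm : t'.Normal)
    (t : Lam) (heq : Lam.BetaEq t t') (σ : ℕ → Lam)
    (hσ : ∀ n B, Γ n = some B → σ n ∈ interp B I)
    (hid : ∀ n, Γ n = none → σ n = Lam.var n) :
    msubst σ t ∈ interp A I :=
  substitution_lemma_aux ht' hI (Lam.betaEq_normal_star heq hnorm) hσ
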